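/- Let p ≥ 1 and s ≥ 1 be integers, let r = s + 1 or r = s + 2, and let G be the graph 𝒢(p,r,s) on n = p + r + s + 2 vertices. Then q₁(G) > d₁(G) + 1 + p/n and q₂(G) > d₂(G) − p/n, where q₁(G) ≥ q₂(G) are the two largest eigenvalues (with multiplicity) of the signless Laplacian Q(G) and d₁(G) ≥ d₂(G) are the two largest vertex degrees of G (here d₁(G) = p + r + 1 and d₂(G) = p + s + 1). -/

import Mathlib

open Matrix

/-- The signless Laplacian matrix `Q(G) = D + A` of a simple graph, over `ℝ`. -/
def sLapMatrix {m : ℕ} (G : SimpleGraph (Fin m)) [DecidableRel G.Adj] :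
    Matrix (Fin m) (Fin m) ℝ :=
  G.degMatrix ℝ + G.adjMatrix ℝ

/-- `q` lists the eigenvalues of `A` (with multiplicity) in non-increasing order. -/
def IsEigSeq {m : ℕ} (A : Matrix (Fin m) (Fin m) ℝ) (q : Fin m → ℝ) : Prop :=
  Antitone q ∧ ∃ (hA : A.IsHermitian) (σ : Equiv.Perm (Fin m)),
    ∀ i, q i = hA.eigenvalues (σ i)

/-- `d` lists the degrees of `G` (with multiplicity) in non-increasing order. -/
def IsDegSeq {m : ℕ} (G : SimpleGraph (Fin m)) [DecidableRel G.Adj] (d : Fin m → ℕ) : Prop :=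
  Antitone d ∧ ∃ σ : Equiv.Perm (Fin m), ∀ i, d i = G.degree (σ i)

/-- The graph `𝒢(p,r,s)` on `p + r + s + 2` vertices: the graph `ℋ(p,r,s)` plus the
edge `{u, v} = {0, 1}`. -/
def GGraph (p r s : ℕ) : SimpleGraph (Fin (p + r + s + 2)) where
  Adj a b :=
    ((a.val = 0 ∧ b.val = 1) ∨ (b.val = 0 ∧ a.val = 1)) ∨
    (((a.val = 0 ∧ 2 ≤ b.val ∧ b.val < p + r + 2) ∨
      (a.val = 1 ∧ 2 ≤ b.val ∧ (b.val < p + 2 ∨ p + r + 2 ≤ b.val))) ∨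
     ((b.val = 0 ∧ 2 ≤ a.val ∧ a.val < p + r + 2) ∨
      (b.val = 1 ∧ 2 ≤ a.val ∧ (a.val < p + 2 ∨ p + r + 2 ≤ a.val))))
  symm := ⟨by intro a b h; tauto⟩
  loopless := ⟨by
    intro a h
    rcases h with (⟨h1, h2⟩ | ⟨h1, h2⟩) |
      ((⟨h1, h2, _⟩ | ⟨h1, h2, _⟩) | (⟨h1, h2, _⟩ | ⟨h1, h2, _⟩)) <;> omega⟩

instance GGraph.adjDecidable (p r s : ℕ) : DecidableRel (GGraph p r s).Adj := fun a b =>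
  inferInstanceAs (Decidable
    (((a.val = 0 ∧ b.val = 1) ∨ (b.val = 0 ∧ a.val = 1)) ∨
     (((a.val = 0 ∧ 2 ≤ b.val ∧ b.val < p + r + 2) ∨
       (a.val = 1 ∧ 2 ≤ b.val ∧ (b.val < p + 2 ∨ p + r + 2 ≤ b.val))) ∨
      ((b.val = 0 ∧ 2 ≤ a.val ∧ a.val < p + r + 2) ∨
       (b.val = 1 ∧ 2 ≤ a.val ∧ (a.val < p + 2 ∨ p + r + 2 ≤ a.val))))))


lemma dotProduct_sum' {m k : ℕ} (w : Fin m → ℝ) (f : Fin k → Fin m → ℝ) :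
    w ⬝ᵥ (∑ j, f j) = ∑ j, w ⬝ᵥ f j := by
  simp only [dotProduct, Finset.sum_apply, Finset.mul_sum]
  exact Finset.sum_comm

lemma sum_dotProduct' {m k : ℕ} (f : Fin k → Fin m → ℝ) (w : Fin m → ℝ) :
    (∑ j, f j) ⬝ᵥ w = ∑ j, f j ⬝ᵥ w := by
  simp only [dotProduct, Finset.sum_apply, Finset.sum_mul]
  exact Finset.sum_comm

lemma quad_form_le {m : ℕ} (A : Matrix (Fin m) (Fin m) ℝ) (hA : A.IsHermitian) (μ : ℝ)
    (z : EuclideanSpace ℝ (Fin m))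
    (h : ∀ j, hA.eigenvalues j ≤ μ ∨ hA.eigenvectorBasis.repr z j = 0) :
    (z : Fin m → ℝ) ⬝ᵥ A.mulVec z ≤ μ * ((z : Fin m → ℝ) ⬝ᵥ z) := by
  classical
  set b := hA.eigenvectorBasis with hb
  set c : Fin m → ℝ := fun j => b.repr z j with hc
  have hz : (z : Fin m → ℝ) = ∑ j, c j • (b j : Fin m → ℝ) := by
    conv_lhs => rw [← b.sum_repr z]
    rw [WithLp.ofLp_sum]; simp only [WithLp.ofLp_smul]; rfl
  have hdot : ∀ i j : Fin m, (b i : Fin m → ℝ) ⬝ᵥ (b j : Fin m → ℝ)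
      = if i = j then (1:ℝ) else 0 := by
    intro i j
    have h2 := (orthonormal_iff_ite.mp b.orthonormal) i j
    rw [EuclideanSpace.inner_eq_star_dotProduct] at h2
    rw [dotProduct_comm]; simpa using h2
  have key : ∀ u d : Fin m → ℝ,
      (∑ j, u j • (b j : Fin m → ℝ)) ⬝ᵥ (∑ j, d j • (b j : Fin m → ℝ)) = ∑ j, u j * d j := by
    intro u d
    have step1 : ∀ j, (∑ i, u i • (b i : Fin m → ℝ)) ⬝ᵥ (d j • (b j : Fin m → ℝ))
        = u j * d j := by
      intro j
      rw [dotProduct_smul, sum_dotProduct']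
      have h3 : ∀ i, (u i • (b i : Fin m → ℝ)) ⬝ᵥ (b j : Fin m → ℝ)
          = u i * (if i = j then (1:ℝ) else 0) := fun i => by
        rw [smul_dotProduct, hdot i j, smul_eq_mul]
      rw [Finset.sum_congr rfl fun i _ => h3 i]
      simp [mul_ite, Finset.sum_ite_eq', mul_comm]
    rw [dotProduct_sum']
    exact Finset.sum_congr rfl fun j _ => step1 j
  have hAz : A.mulVec (z : Fin m → ℝ) = ∑ j, (c j * hA.eigenvalues j) • (b j : Fin m → ℝ) := by
    rw [hz, ← Matrix.mulVecLin_apply, map_sum]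
    apply Finset.sum_congr rfl
    intro j _
    rw [_root_.map_smul, Matrix.mulVecLin_apply]
    rw [show A *ᵥ (b j : Fin m → ℝ) = hA.eigenvalues j • (b j : Fin m → ℝ) from
      hA.mulVec_eigenvectorBasis j]
    rw [smul_smul, mul_comm]
  have hquad : (z : Fin m → ℝ) ⬝ᵥ A.mulVec z = ∑ j, hA.eigenvalues j * (c j)^2 := by
    rw [hAz]
    conv_lhs => rw [hz]
    rw [key]
    exact Finset.sum_congr rfl fun j _ => by ring
  have hnorm : (z : Fin m → ℝ) ⬝ᵥ (z : Fin m → ℝ) = ∑ j, (c j)^2 := by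
    conv_lhs => rw [hz]
    rw [key]
    exact Finset.sum_congr rfl fun j _ => by ring
  rw [hquad, hnorm, Finset.mul_sum]
  apply Finset.sum_le_sum
  intro j _
  rcases h j with hle | hzero
  · nlinarith [sq_nonneg (c j)]
  · have : c j = 0 := hzero
    simp [this]

lemma top_bound {m : ℕ} (hm : 0 < m) (A : Matrix (Fin m) (Fin m) ℝ) (q : Fin m → ℝ)
    (hq : IsEigSeq A q) (x : Fin m → ℝ) :
    x ⬝ᵥ A.mulVec x ≤ q ⟨0, hm⟩ * (x ⬝ᵥ x) := by
  obtain ⟨hant, hA, σ, hqe⟩ := hq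
  refine quad_form_le A hA _ (WithLp.toLp 2 x) (fun j => Or.inl ?_)
  have h1 : hA.eigenvalues j = q (σ.symm j) := by rw [hqe, Equiv.apply_symm_apply]
  rw [h1]
  exact hant (by simp [Fin.le_def])

lemma second_bound {m : ℕ} (hm : 1 < m) (A : Matrix (Fin m) (Fin m) ℝ) (q : Fin m → ℝ)
    (hq : IsEigSeq A q) (x y : Fin m → ℝ) :
    ∃ α β : ℝ, ¬(α = 0 ∧ β = 0) ∧
      (α • x + β • y) ⬝ᵥ A.mulVec (α • x + β • y)
        ≤ q ⟨1, hm⟩ * ((α • x + β • y) ⬝ᵥ (α • x + β • y)) := by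
  obtain ⟨hant, hA, σ, hqe⟩ := hq
  have hm0 : 0 < m := by omega
  set k : Fin m := σ ⟨0, hm0⟩ with hk
  set b := hA.eigenvectorBasis with hb
  have main : ∀ α β : ℝ, b.repr (α • WithLp.toLp 2 x + β • WithLp.toLp 2 y) k = 0 →
      (α • x + β • y) ⬝ᵥ A.mulVec (α • x + β • y)
        ≤ q ⟨1, hm⟩ * ((α • x + β • y) ⬝ᵥ (α • x + β • y)) := by
    intro α β hrep
    refine quad_form_le A hA _ (α • WithLp.toLp 2 x + β • WithLp.toLp 2 y) (fun j => ?_)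
    by_cases hjk : j = k
    · exact Or.inr (by rw [hjk]; exact hrep)
    · refine Or.inl ?_
      have h1 : hA.eigenvalues j = q (σ.symm j) := by rw [hqe, Equiv.apply_symm_apply]
      rw [h1]
      refine hant ?_
      have h2 : σ.symm j ≠ ⟨0, hm0⟩ := by
        intro hcon
        exact hjk (by rw [← Equiv.apply_symm_apply σ j, hcon])
      rw [Fin.le_def]
      show 1 ≤ (σ.symm j).val
      rcases Nat.eq_zero_or_pos (σ.symm j).val with h0 | h0
      · exact absurd (Fin.ext h0) h2
      · exact h0
  have hlin : ∀ α β : ℝ, b.repr (α • WithLp.toLp 2 x + β • WithLp.toLp 2 y) k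
      = α * b.repr (WithLp.toLp 2 x) k + β * b.repr (WithLp.toLp 2 y) k := by
    intro α β
    rw [map_add, _root_.map_smul, _root_.map_smul]
    rfl
  set cx : ℝ := b.repr (WithLp.toLp 2 x) k
  set cy : ℝ := b.repr (WithLp.toLp 2 y) k
  by_cases hc : cx = 0 ∧ cy = 0
  · refine ⟨1, 0, by simp, main 1 0 ?_⟩
    rw [hlin]
    simp [hc.1]
  · refine ⟨cy, -cx, ?_, main cy (-cx) ?_⟩
    · intro hcon
      exact hc ⟨neg_eq_zero.mp hcon.2, hcon.1⟩
    · rw [hlin]; ring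

/-- piecewise value function on ℕ -/
def ivec (p r : ℕ) (a b t c e : ℝ) : ℕ → ℝ := fun k =>
  if k = 0 then a else if k = 1 then b else if k < p + 2 then t
  else if k < p + r + 2 then c else e

def vvec (p r s : ℕ) (a b t c e : ℝ) : Fin (p + r + s + 2) → ℝ := fun i =>
  ivec p r a b t c e i.val

lemma sum_split {M : Type*} [AddCommMonoid M] (p r s : ℕ) (g : ℕ → M) :
    ∑ j ∈ Finset.range (p + r + s + 2), g j =
      g 0 + g 1 + (∑ j ∈ Finset.Ico 2 (p + 2), g j)
      + (∑ j ∈ Finset.Ico (p + 2) (p + r + 2), g j)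
      + ∑ j ∈ Finset.Ico (p + r + 2) (p + r + s + 2), g j := by
  rw [Finset.range_eq_Ico]
  rw [← Finset.sum_Ico_consecutive g (show (0:ℕ) ≤ 2 by omega) (show 2 ≤ p + r + s + 2 by omega)]
  rw [← Finset.sum_Ico_consecutive g (show (2:ℕ) ≤ p + 2 by omega)
    (show p + 2 ≤ p + r + s + 2 by omega)]
  rw [← Finset.sum_Ico_consecutive g (show p + 2 ≤ p + r + 2 by omega)
    (show p + r + 2 ≤ p + r + s + 2 by omega)]
  have h02 : ∑ j ∈ Finset.Ico 0 2, g j = g 0 + g 1 := by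
    rw [← Finset.range_eq_Ico]
    rw [Finset.sum_range_succ, Finset.sum_range_succ, Finset.sum_range_zero, zero_add]
  rw [h02]
  ring_nf
  abel

lemma sum_ivec (p r s : ℕ) (a b t c e : ℝ) :
    ∑ j ∈ Finset.range (p + r + s + 2), ivec p r a b t c e j
      = a + b + p * t + r * c + s * e := by
  rw [sum_split p r s]
  have h0 : ivec p r a b t c e 0 = a := by simp [ivec]
  have h1 : ivec p r a b t c e 1 = b := by simp [ivec]
  have hP : ∑ j ∈ Finset.Ico 2 (p + 2), ivec p r a b t c e j = p * t := by
    rw [Finset.sum_eq_card_nsmul (fun j hj => by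
      rw [Finset.mem_Ico] at hj
      show ivec p r a b t c e j = t
      unfold ivec
      rw [if_neg (by omega), if_neg (by omega), if_pos (by omega)] : ∀ j ∈ _, _ = t)]
    rw [Nat.card_Ico, nsmul_eq_mul]
    norm_num
  have hR : ∑ j ∈ Finset.Ico (p + 2) (p + r + 2), ivec p r a b t c e j = r * c := by
    rw [Finset.sum_eq_card_nsmul (fun j hj => by
      rw [Finset.mem_Ico] at hj
      show ivec p r a b t c e j = c
      unfold ivec
      rw [if_neg (by omega), if_neg (by omega), if_neg (by omega), if_pos (by omega)] :
        ∀ j ∈ _, _ = c)]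
    rw [Nat.card_Ico, nsmul_eq_mul]
    have : p + r + 2 - (p + 2) = r := by omega
    rw [this]
  have hS : ∑ j ∈ Finset.Ico (p + r + 2) (p + r + s + 2), ivec p r a b t c e j = s * e := by
    rw [Finset.sum_eq_card_nsmul (fun j hj => by
      rw [Finset.mem_Ico] at hj
      show ivec p r a b t c e j = e
      unfold ivec
      rw [if_neg (by omega), if_neg (by omega), if_neg (by omega), if_neg (by omega)] :
        ∀ j ∈ _, _ = e)]
    rw [Nat.card_Ico, nsmul_eq_mul]
    have : p + r + s + 2 - (p + r + 2) = s := by omega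
    rw [this]
  rw [h0, h1, hP, hR, hS]

lemma sum_vvec (p r s : ℕ) (a b t c e : ℝ) :
    ∑ j : Fin (p + r + s + 2), vvec p r s a b t c e j
      = a + b + p * t + r * c + s * e := by
  rw [← sum_ivec p r s a b t c e]
  exact Fin.sum_univ_eq_sum_range (ivec p r a b t c e) (p + r + s + 2)

section nbr
variable (p r s : ℕ)

lemma adj_unfold (i j : Fin (p + r + s + 2)) :
    (GGraph p r s).Adj i j ↔
    (((i.val = 0 ∧ j.val = 1) ∨ (j.val = 0 ∧ i.val = 1)) ∨
     (((i.val = 0 ∧ 2 ≤ j.val ∧ j.val < p + r + 2) ∨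
       (i.val = 1 ∧ 2 ≤ j.val ∧ (j.val < p + 2 ∨ p + r + 2 ≤ j.val))) ∨
      ((j.val = 0 ∧ 2 ≤ i.val ∧ i.val < p + r + 2) ∨
       (j.val = 1 ∧ 2 ≤ i.val ∧ (i.val < p + 2 ∨ p + r + 2 ≤ i.val))))) := Iff.rfl

lemma nbr_master (i : Fin (p + r + s + 2)) (a b t c e a₂ b₂ t₂ c₂ e₂ : ℝ)
    (P : ℕ → Prop) [DecidablePred P]
    (hadj : ∀ j : Fin (p + r + s + 2), (GGraph p r s).Adj i j ↔ P j.val)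
    (hval : ∀ k : ℕ, k < p + r + s + 2 →
      (if P k then ivec p r a b t c e k else 0) = ivec p r a₂ b₂ t₂ c₂ e₂ k) :
    ∑ j ∈ (GGraph p r s).neighborFinset i, vvec p r s a b t c e j
      = a₂ + b₂ + p * t₂ + r * c₂ + s * e₂ := by
  rw [SimpleGraph.neighborFinset_eq_filter, Finset.sum_filter]
  rw [Finset.sum_congr rfl (fun j _ => by
    have hite : (if (GGraph p r s).Adj i j then vvec p r s a b t c e j else 0)
        = (if P j.val then vvec p r s a b t c e j else 0) := by
      by_cases h : (GGraph p r s).Adj i j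
      · rw [if_pos h, if_pos ((hadj j).mp h)]
      · rw [if_neg h, if_neg (fun hc => h ((hadj j).mpr hc))]
    rw [hite]
    exact hval j.val j.isLt : ∀ j ∈ Finset.univ, _ = vvec p r s a₂ b₂ t₂ c₂ e₂ j)]
  exact sum_vvec p r s _ _ _ _ _

lemma nbr0 (i : Fin (p + r + s + 2)) (hi : i.val = 0) (a b t c e : ℝ) :
    ∑ j ∈ (GGraph p r s).neighborFinset i, vvec p r s a b t c e j
      = b + p * t + r * c := by
  have := nbr_master p r s i a b t c e 0 b t c 0
    (fun k => k = 1 ∨ (2 ≤ k ∧ k < p + r + 2))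
    (fun j => by rw [adj_unfold]; omega)
    (fun k hk => by unfold ivec; split_ifs <;> first | rfl | (exfalso; omega))
  rw [this]; ring

lemma nbr1 (i : Fin (p + r + s + 2)) (hi : i.val = 1) (a b t c e : ℝ) :
    ∑ j ∈ (GGraph p r s).neighborFinset i, vvec p r s a b t c e j
      = a + p * t + s * e := by
  have := nbr_master p r s i a b t c e a 0 t 0 e
    (fun k => k = 0 ∨ (2 ≤ k ∧ (k < p + 2 ∨ p + r + 2 ≤ k)))
    (fun j => by rw [adj_unfold]; omega)
    (fun k hk => by unfold ivec; split_ifs <;> first | rfl | (exfalso; omega))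
  rw [this]; ring

lemma nbrP (i : Fin (p + r + s + 2)) (hi : 2 ≤ i.val ∧ i.val < p + 2) (a b t c e : ℝ) :
    ∑ j ∈ (GGraph p r s).neighborFinset i, vvec p r s a b t c e j = a + b := by
  have := nbr_master p r s i a b t c e a b 0 0 0
    (fun k => k = 0 ∨ k = 1)
    (fun j => by rw [adj_unfold]; omega)
    (fun k hk => by unfold ivec; split_ifs <;> first | rfl | (exfalso; omega))
  rw [this]; ring

lemma nbrR (i : Fin (p + r + s + 2)) (hi : p + 2 ≤ i.val ∧ i.val < p + r + 2)
    (a b t c e : ℝ) :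
    ∑ j ∈ (GGraph p r s).neighborFinset i, vvec p r s a b t c e j = a := by
  have := nbr_master p r s i a b t c e a 0 0 0 0
    (fun k => k = 0)
    (fun j => by rw [adj_unfold]; omega)
    (fun k hk => by unfold ivec; split_ifs <;> first | rfl | (exfalso; omega))
  rw [this]; ring

lemma nbrS (i : Fin (p + r + s + 2)) (hi : p + r + 2 ≤ i.val) (a b t c e : ℝ) :
    ∑ j ∈ (GGraph p r s).neighborFinset i, vvec p r s a b t c e j = b := by
  have := nbr_master p r s i a b t c e 0 b 0 0 0
    (fun k => k = 1)
    (fun j => by rw [adj_unfold]; omega)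
    (fun k hk => by unfold ivec; split_ifs <;> first | rfl | (exfalso; omega))
  rw [this]; ring

lemma deg_cast (i : Fin (p + r + s + 2)) :
    (((GGraph p r s).degree i : ℝ))
      = ∑ j ∈ (GGraph p r s).neighborFinset i, vvec p r s 1 1 1 1 1 j := by
  rw [Finset.sum_congr rfl (fun j _ => by
    show vvec p r s 1 1 1 1 1 j = (1:ℝ)
    unfold vvec ivec
    split_ifs <;> rfl : ∀ j ∈ _, _ = (1:ℝ))]
  rw [Finset.sum_const, nsmul_eq_mul, mul_one, SimpleGraph.degree]

lemma deg0 (i : Fin (p + r + s + 2)) (hi : i.val = 0) :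
    (((GGraph p r s).degree i : ℝ)) = p + r + 1 := by
  rw [deg_cast, nbr0 p r s i hi]; ring

lemma deg1 (i : Fin (p + r + s + 2)) (hi : i.val = 1) :
    (((GGraph p r s).degree i : ℝ)) = p + s + 1 := by
  rw [deg_cast, nbr1 p r s i hi]; ring

lemma degP (i : Fin (p + r + s + 2)) (hi : 2 ≤ i.val ∧ i.val < p + 2) :
    (((GGraph p r s).degree i : ℝ)) = 2 := by
  rw [deg_cast, nbrP p r s i hi]; ring

lemma degR (i : Fin (p + r + s + 2)) (hi : p + 2 ≤ i.val ∧ i.val < p + r + 2) :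
    (((GGraph p r s).degree i : ℝ)) = 1 := by
  rw [deg_cast, nbrR p r s i hi]

lemma degS (i : Fin (p + r + s + 2)) (hi : p + r + 2 ≤ i.val) :
    (((GGraph p r s).degree i : ℝ)) = 1 := by
  rw [deg_cast, nbrS p r s i hi]

lemma vvec_apply0 (i : Fin (p + r + s + 2)) (hi : i.val = 0) (a b t c e : ℝ) :
    vvec p r s a b t c e i = a := by unfold vvec ivec; rw [if_pos hi]

lemma vvec_apply1 (i : Fin (p + r + s + 2)) (hi : i.val = 1) (a b t c e : ℝ) :
    vvec p r s a b t c e i = b := by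
  unfold vvec ivec; rw [if_neg (by omega), if_pos hi]

lemma vvec_applyP (i : Fin (p + r + s + 2)) (hi : 2 ≤ i.val ∧ i.val < p + 2)
    (a b t c e : ℝ) : vvec p r s a b t c e i = t := by
  unfold vvec ivec; rw [if_neg (by omega), if_neg (by omega), if_pos (by omega)]

lemma vvec_applyR (i : Fin (p + r + s + 2)) (hi : p + 2 ≤ i.val ∧ i.val < p + r + 2)
    (a b t c e : ℝ) : vvec p r s a b t c e i = c := by
  unfold vvec ivec
  rw [if_neg (by omega), if_neg (by omega), if_neg (by omega), if_pos (by omega)]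

lemma vvec_applyS (i : Fin (p + r + s + 2)) (hi : p + r + 2 ≤ i.val)
    (a b t c e : ℝ) : vvec p r s a b t c e i = e := by
  unfold vvec ivec
  rw [if_neg (by omega), if_neg (by omega), if_neg (by omega), if_neg (by omega)]

lemma sLap_mulVec (a' b' t' c' e' : ℝ) (i : Fin (p + r + s + 2)) :
    (sLapMatrix (GGraph p r s)).mulVec (vvec p r s a' b' t' c' e') i
      = vvec p r s ((p + r + 1) * a' + (b' + p * t' + r * c'))
          ((p + s + 1) * b' + (a' + p * t' + s * e'))
          (2 * t' + (a' + b')) (c' + a') (e' + b') i := by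
  rw [sLapMatrix, Matrix.add_mulVec, Pi.add_apply, SimpleGraph.degMatrix_mulVec_apply,
      SimpleGraph.adjMatrix_mulVec_apply]
  have hsplit : i.val = 0 ∨ i.val = 1 ∨ (2 ≤ i.val ∧ i.val < p + 2)
      ∨ (p + 2 ≤ i.val ∧ i.val < p + r + 2) ∨ p + r + 2 ≤ i.val := by omega
  rcases hsplit with hi | hi | hi | hi | hi
  · rw [deg0 p r s i hi, nbr0 p r s i hi, vvec_apply0 p r s i hi, vvec_apply0 p r s i hi]
    try ring
  · rw [deg1 p r s i hi, nbr1 p r s i hi, vvec_apply1 p r s i hi, vvec_apply1 p r s i hi]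
    try ring
  · rw [degP p r s i hi, nbrP p r s i hi, vvec_applyP p r s i hi, vvec_applyP p r s i hi]
    try ring
  · rw [degR p r s i hi, nbrR p r s i hi, vvec_applyR p r s i hi, vvec_applyR p r s i hi]
    try ring
  · rw [degS p r s i hi, nbrS p r s i hi, vvec_applyS p r s i hi, vvec_applyS p r s i hi]
    try ring

lemma vvec_mul (a b t c e a' b' t' c' e' : ℝ) (i : Fin (p + r + s + 2)) :
    vvec p r s a b t c e i * vvec p r s a' b' t' c' e' i
      = vvec p r s (a * a') (b * b') (t * t') (c * c') (e * e') i := by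
  unfold vvec ivec
  split_ifs <;> rfl

lemma dot_eval (a b t c e a' b' t' c' e' : ℝ) :
    vvec p r s a b t c e ⬝ᵥ vvec p r s a' b' t' c' e'
      = a * a' + b * b' + p * (t * t') + r * (c * c') + s * (e * e') := by
  unfold dotProduct
  rw [Finset.sum_congr rfl (fun i _ => vvec_mul p r s a b t c e a' b' t' c' e' i)]
  exact sum_vvec p r s _ _ _ _ _

lemma form_eval (a b t c e a' b' t' c' e' : ℝ) :
    vvec p r s a b t c e ⬝ᵥ (sLapMatrix (GGraph p r s)).mulVec (vvec p r s a' b' t' c' e')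
      = a * ((p + r + 1) * a' + (b' + p * t' + r * c'))
        + b * ((p + s + 1) * b' + (a' + p * t' + s * e'))
        + p * (t * (2 * t' + (a' + b'))) + r * (c * (c' + a')) + s * (e * (e' + b')) := by
  unfold dotProduct
  rw [Finset.sum_congr rfl (fun i _ => by
    rw [sLap_mulVec p r s a' b' t' c' e' i, vvec_mul]
      : ∀ i ∈ Finset.univ, _ = vvec p r s _ _ _ _ _ i)]
  exact sum_vvec p r s _ _ _ _ _

lemma vvec_smul_add (α β a b t c e a' b' t' c' e' : ℝ) :
    α • vvec p r s a b t c e + β • vvec p r s a' b' t' c' e'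
      = vvec p r s (α * a + β * a') (α * b + β * b') (α * t + β * t')
          (α * c + β * c') (α * e + β * e') := by
  funext i
  simp only [Pi.add_apply, Pi.smul_apply, smul_eq_mul]
  unfold vvec ivec
  split_ifs <;> rfl

end nbr

lemma dot_self_nonneg' {m : ℕ} (x : Fin m → ℝ) : 0 ≤ x ⬝ᵥ x :=
  Finset.sum_nonneg fun i _ => mul_self_nonneg (x i)

lemma q1_glue (p r s : ℕ) (q : Fin (p + r + s + 2) → ℝ)
    (hq : IsEigSeq (sLapMatrix (GGraph p r s)) q) (x : Fin (p + r + s + 2) → ℝ)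
    (hcert : (((p : ℝ) + r + 2) * ((p : ℝ) + r + s + 2) + p) * (x ⬝ᵥ x)
      < ((p : ℝ) + r + s + 2) * (x ⬝ᵥ (sLapMatrix (GGraph p r s)).mulVec x)) :
    ((p : ℝ) + r + 2) + (p : ℝ) / ((p : ℝ) + r + s + 2) < q ⟨0, by omega⟩ := by
  have hm : 0 < p + r + s + 2 := by omega
  have hn : (0 : ℝ) < (p : ℝ) + r + s + 2 := by positivity
  have htop := top_bound hm (sLapMatrix (GGraph p r s)) q hq x
  have hN : 0 < x ⬝ᵥ x := by
    rcases lt_or_eq_of_le (dot_self_nonneg' x) with h | h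
    · exact h
    · exfalso
      have hB : (0:ℝ) < ((p : ℝ) + r + s + 2) * (x ⬝ᵥ (sLapMatrix (GGraph p r s)).mulVec x) := by
        calc (0:ℝ) = (((p : ℝ) + r + 2) * ((p : ℝ) + r + s + 2) + p) * (x ⬝ᵥ x) := by
              rw [← h, mul_zero]
          _ < _ := hcert
      have hB2 : x ⬝ᵥ (sLapMatrix (GGraph p r s)).mulVec x ≤ 0 := by
        rw [← h] at htop; linarith [htop]
      nlinarith
  have step : (((p : ℝ) + r + 2) * ((p : ℝ) + r + s + 2) + p)
      < q ⟨0, by omega⟩ * ((p : ℝ) + r + s + 2) := by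
    have h2 : ((p : ℝ) + r + s + 2) * (x ⬝ᵥ (sLapMatrix (GGraph p r s)).mulVec x)
        ≤ (q ⟨0, by omega⟩ * ((p : ℝ) + r + s + 2)) * (x ⬝ᵥ x) := by
      calc ((p : ℝ) + r + s + 2) * (x ⬝ᵥ (sLapMatrix (GGraph p r s)).mulVec x)
          ≤ ((p : ℝ) + r + s + 2) * (q ⟨0, by omega⟩ * (x ⬝ᵥ x)) :=
            mul_le_mul_of_nonneg_left htop (le_of_lt hn)
        _ = (q ⟨0, by omega⟩ * ((p : ℝ) + r + s + 2)) * (x ⬝ᵥ x) := by ring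
    exact lt_of_mul_lt_mul_right (lt_of_lt_of_le hcert h2) (le_of_lt hN)
  rw [show ((p : ℝ) + r + 2) + (p : ℝ) / ((p : ℝ) + r + s + 2)
      = (((p : ℝ) + r + 2) * ((p : ℝ) + r + s + 2) + p) / ((p : ℝ) + r + s + 2) by
    field_simp]
  rw [div_lt_iff₀ hn]
  exact step

lemma q2_glue (p r s : ℕ) (q : Fin (p + r + s + 2) → ℝ)
    (hq : IsEigSeq (sLapMatrix (GGraph p r s)) q) (x y : Fin (p + r + s + 2) → ℝ)
    (hcert : ∀ α β : ℝ, ¬(α = 0 ∧ β = 0) →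
      ((((p : ℝ) + s + 1) * ((p : ℝ) + r + s + 2) - p) * ((α • x + β • y) ⬝ᵥ (α • x + β • y))
        < ((p : ℝ) + r + s + 2) *
          ((α • x + β • y) ⬝ᵥ (sLapMatrix (GGraph p r s)).mulVec (α • x + β • y)))) :
    ((p : ℝ) + s + 1) - (p : ℝ) / ((p : ℝ) + r + s + 2) < q ⟨1, by omega⟩ := by
  have hm : 1 < p + r + s + 2 := by omega
  have hn : (0 : ℝ) < (p : ℝ) + r + s + 2 := by positivity
  obtain ⟨α, β, hne, hle⟩ := second_bound hm (sLapMatrix (GGraph p r s)) q hq x y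
  set z := α • x + β • y with hz
  have hc := hcert α β hne
  have hN : 0 < z ⬝ᵥ z := by
    rcases lt_or_eq_of_le (dot_self_nonneg' z) with h | h
    · exact h
    · exfalso
      have hB : (0:ℝ) < ((p : ℝ) + r + s + 2) * (z ⬝ᵥ (sLapMatrix (GGraph p r s)).mulVec z) := by
        calc (0:ℝ) = ((((p : ℝ) + s + 1) * ((p : ℝ) + r + s + 2) - p)) * (z ⬝ᵥ z) := by
              rw [← h, mul_zero]
          _ < _ := hc
      have hB2 : z ⬝ᵥ (sLapMatrix (GGraph p r s)).mulVec z ≤ 0 := by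
        rw [← h] at hle; linarith [hle]
      nlinarith
  have step : (((p : ℝ) + s + 1) * ((p : ℝ) + r + s + 2) - p)
      < q ⟨1, by omega⟩ * ((p : ℝ) + r + s + 2) := by
    have h2 : ((p : ℝ) + r + s + 2) * (z ⬝ᵥ (sLapMatrix (GGraph p r s)).mulVec z)
        ≤ (q ⟨1, by omega⟩ * ((p : ℝ) + r + s + 2)) * (z ⬝ᵥ z) := by
      calc ((p : ℝ) + r + s + 2) * (z ⬝ᵥ (sLapMatrix (GGraph p r s)).mulVec z)
          ≤ ((p : ℝ) + r + s + 2) * (q ⟨1, hm⟩ * (z ⬝ᵥ z)) :=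
            mul_le_mul_of_nonneg_left hle (le_of_lt hn)
        _ = (q ⟨1, by omega⟩ * ((p : ℝ) + r + s + 2)) * (z ⬝ᵥ z) := by ring
    exact lt_of_mul_lt_mul_right (lt_of_lt_of_le hc h2) (le_of_lt hN)
  rw [show ((p : ℝ) + s + 1) - (p : ℝ) / ((p : ℝ) + r + s + 2)
      = (((p : ℝ) + s + 1) * ((p : ℝ) + r + s + 2) - p) / ((p : ℝ) + r + s + 2) by
    field_simp]
  rw [div_lt_iff₀ hn]
  exact step

lemma degN (p r s : ℕ) (i : Fin (p + r + s + 2)) :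
    (GGraph p r s).degree i = if i.val = 0 then p + r + 1 else if i.val = 1 then p + s + 1
      else if i.val < p + 2 then 2 else 1 := by
  have hsplit : i.val = 0 ∨ i.val = 1 ∨ (2 ≤ i.val ∧ i.val < p + 2)
      ∨ (p + 2 ≤ i.val ∧ i.val < p + r + 2) ∨ p + r + 2 ≤ i.val := by omega
  have cast_eq : ∀ k : ℕ, ((GGraph p r s).degree i : ℝ) = (k : ℝ) → (GGraph p r s).degree i = k :=
    fun k h => Nat.cast_injective h
  rcases hsplit with hi | hi | hi | hi | hi
  · rw [if_pos hi]
    exact cast_eq _ (by rw [deg0 p r s i hi]; push_cast; ring)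
  · rw [if_neg (by omega), if_pos hi]
    exact cast_eq _ (by rw [deg1 p r s i hi]; push_cast; ring)
  · rw [if_neg (by omega), if_neg (by omega), if_pos (by omega)]
    exact cast_eq _ (by rw [degP p r s i hi]; push_cast; ring)
  · rw [if_neg (by omega), if_neg (by omega), if_neg (by omega)]
    exact cast_eq _ (by rw [degR p r s i hi]; push_cast; ring)
  · rw [if_neg (by omega), if_neg (by omega), if_neg (by omega)]
    exact cast_eq _ (by rw [degS p r s i hi]; push_cast; ring)

lemma deg_seq_vals (p r s : ℕ) (hp : 1 ≤ p) (hs : 1 ≤ s) (hrs : s < r)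
    (d : Fin (p + r + s + 2) → ℕ) (hd : IsDegSeq (GGraph p r s) d) :
    d ⟨0, by omega⟩ = p + r + 1 ∧ d ⟨1, by omega⟩ = p + s + 1 := by
  obtain ⟨hant, σ, hdeg⟩ := hd
  set v0 : Fin (p + r + s + 2) := ⟨0, by omega⟩ with hv0
  set v1 : Fin (p + r + s + 2) := ⟨1, by omega⟩ with hv1
  have hdv0 : (GGraph p r s).degree v0 = p + r + 1 := by rw [degN]; simp [hv0]
  have hdv1 : (GGraph p r s).degree v1 = p + s + 1 := by rw [degN]; simp [hv1]
  have hmax : ∀ i, (GGraph p r s).degree i ≤ p + r + 1 := by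
    intro i; rw [degN]; split_ifs <;> omega
  have hsec : ∀ i, i ≠ v0 → (GGraph p r s).degree i ≤ p + s + 1 := by
    intro i hi
    have : i.val ≠ 0 := by
      intro hval; exact hi (Fin.ext hval)
    rw [degN]
    split_ifs <;> omega
  have hd0 : d v0 = p + r + 1 := by
    have hub : d v0 ≤ p + r + 1 := by rw [hdeg]; exact hmax _
    have hlb : p + r + 1 ≤ d v0 := by
      have h1 : d (σ.symm v0) = p + r + 1 := by rw [hdeg, Equiv.apply_symm_apply, hdv0]
      have h2 : v0 ≤ σ.symm v0 := by rw [Fin.le_def]; simp [hv0]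
      calc p + r + 1 = d (σ.symm v0) := h1.symm
        _ ≤ d v0 := hant h2
    omega
  refine ⟨hd0, ?_⟩
  have hub : d v1 ≤ p + s + 1 := by
    by_cases hcase : σ v1 = v0
    · exfalso
      have h1 : σ v0 ≠ v0 := by
        intro hcon
        have := σ.injective (hcon.trans hcase.symm)
        simp [hv0, hv1, Fin.ext_iff] at this
      have h2 : d v0 ≤ p + s + 1 := by rw [hdeg]; exact hsec _ h1
      omega
    · rw [hdeg]; exact hsec _ hcase
  have hlb : p + s + 1 ≤ d v1 := by
    have h1 : d (σ.symm v1) = p + s + 1 := by rw [hdeg, Equiv.apply_symm_apply, hdv1]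
    have h2 : σ.symm v1 ≠ v0 := by
      intro hcon
      have : v1 = σ v0 := by rw [← hcon, Equiv.apply_symm_apply]
      have h3 : d v0 = p + s + 1 := by rw [hdeg, ← this, hdv1]
      omega
    have h3 : v1 ≤ σ.symm v1 := by
      have hvv : (σ.symm v1).val ≠ 0 := fun hval => h2 (Fin.ext hval)
      rw [Fin.le_def]
      show 1 ≤ (σ.symm v1).val
      omega
    calc p + s + 1 = d (σ.symm v1) := h1.symm
      _ ≤ d v1 := hant h3
  omega

set_option maxHeartbeats 4000000 in
lemma quad_pos (m11 m12 m22 : ℝ) (α β : ℝ) (h11 : 0 < m11)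
    (hdet : 0 < m11 * m22 - m12 ^ 2) (hne : ¬(α = 0 ∧ β = 0)) :
    0 < m11 * α ^ 2 + 2 * m12 * (α * β) + m22 * β ^ 2 := by
  rcases eq_or_ne β 0 with hb | hb
  · have hα : α ≠ 0 := fun ha => hne ⟨ha, hb⟩
    have hα2 : (0:ℝ) < α ^ 2 := lt_of_le_of_ne (sq_nonneg α) (Ne.symm (pow_ne_zero 2 hα))
    subst hb
    nlinarith [mul_pos h11 hα2]
  · have hβ2 : (0:ℝ) < β ^ 2 := lt_of_le_of_ne (sq_nonneg β) (Ne.symm (pow_ne_zero 2 hb))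
    nlinarith [sq_nonneg (m11 * α + m12 * β), mul_pos hdet hβ2, h11]

set_option maxHeartbeats 4000000 in
theorem GGraph_r_close_to_s_bounds {p r s : ℕ} (hp : 1 ≤ p) (hs : 1 ≤ s)
    (hr : r = s + 1 ∨ r = s + 2)
    (q : Fin (p + r + s + 2) → ℝ) (hq : IsEigSeq (sLapMatrix (GGraph p r s)) q)
    (d : Fin (p + r + s + 2) → ℕ) (hd : IsDegSeq (GGraph p r s) d) :
    q ⟨0, by omega⟩ > (d ⟨0, by omega⟩ : ℝ) + 1 + (p : ℝ) / (p + r + s + 2 : ℕ) ∧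
    q ⟨1, by omega⟩ > (d ⟨1, by omega⟩ : ℝ) - (p : ℝ) / (p + r + s + 2 : ℕ) := by
  have hrs : s < r := by omega
  obtain ⟨hd0, hd1⟩ := deg_seq_vals p r s hp hs hrs d hd
  obtain ⟨P, rfl⟩ : ∃ P, p = P + 1 := ⟨p - 1, by omega⟩
  obtain ⟨S, rfl⟩ : ∃ S, s = S + 1 := ⟨s - 1, by omega⟩
  rcases hr with rfl | rfl
  · -- r = S + 2
    have hA1 : ∃ A1 : ℝ, A1 = (P:ℝ)+(S:ℝ)+5 := ⟨_, rfl⟩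
    obtain ⟨A1, hA1⟩ := hA1
    have hB1 : ∃ B1 : ℝ, B1 = (P:ℝ)+(S:ℝ)+4 := ⟨_, rfl⟩
    obtain ⟨B1, hB1⟩ := hB1
    have hC1 : ∃ C1 : ℝ, C1 = 2*(P:ℝ)+2*(S:ℝ)+5 := ⟨_, rfl⟩
    obtain ⟨C1, hC1⟩ := hC1
    have hD1 : ∃ D1 : ℝ, D1 = 2*(P:ℝ)+2*(S:ℝ)+3 := ⟨_, rfl⟩
    obtain ⟨D1, hD1⟩ := hD1
    constructor
    · -- q1 bound
      have hb1 := q1_glue _ _ _ q hq (vvec _ _ _ (3*A1*B1) (2*A1*B1) (5*A1) (3*B1) (2*B1)) ?cert1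
      case cert1 =>
        rw [dot_eval, form_eval]
        have hpos : (0:ℝ) < 13245 + 17546*(S:ℝ) + 9198*(S:ℝ)^2 + 2407*(S:ℝ)^3 + 313*(S:ℝ)^4 + 16*(S:ℝ)^5 + 18977*(P:ℝ) + 20217*(P:ℝ)*(S:ℝ) + 7819*(P:ℝ)*(S:ℝ)^2 + 1324*(P:ℝ)*(S:ℝ)^3 + 83*(P:ℝ)*(S:ℝ)^4 + 8725*(P:ℝ)^2 + 7228*(P:ℝ)^2*(S:ℝ) + 1889*(P:ℝ)^2*(S:ℝ)^2 + 160*(P:ℝ)^2*(S:ℝ)^3 + 1816*(P:ℝ)^3 + 1058*(P:ℝ)^3*(S:ℝ) + 142*(P:ℝ)^3*(S:ℝ)^2 + 180*(P:ℝ)^4 + 56*(P:ℝ)^4*(S:ℝ) + 7*(P:ℝ)^5 := by positivity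
        subst hA1 hB1
        push_cast
        linarith [hpos]
      rw [hd0]
      push_cast at hb1 ⊢
      linarith [hb1]
    · -- q2 bound
      have hb2 := q2_glue _ _ _ q hq (vvec _ _ _ (3*A1*B1) (2*A1*B1) (5*A1) (3*B1) (2*B1)) (vvec _ _ _ (2*C1*D1) (-3*(C1*D1)) (-2*C1) (4*D1) (-6*D1)) ?cert2
      case cert2 =>
        intro α β hne
        rw [vvec_smul_add, dot_eval, form_eval]
        have h11 : (0:ℝ) < 99723 + 116650*(S:ℝ) + 54590*(S:ℝ)^2 + 12761*(S:ℝ)^3 + 1483*(S:ℝ)^4 + 68*(S:ℝ)^5 + 123919*(P:ℝ) + 114713*(P:ℝ)*(S:ℝ) + 39633*(P:ℝ)*(S:ℝ)^2 + 6052*(P:ℝ)*(S:ℝ)^3 + 343*(P:ℝ)*(S:ℝ)^4 + 57829*(P:ℝ)^2 + 39794*(P:ℝ)^2*(S:ℝ) + 9053*(P:ℝ)^2*(S:ℝ)^2 + 680*(P:ℝ)^2*(S:ℝ)^3 + 12922*(P:ℝ)^3 + 5882*(P:ℝ)^3*(S:ℝ) + 662*(P:ℝ)^3*(S:ℝ)^2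 + 1398*(P:ℝ)^4 + 316*(P:ℝ)^4*(S:ℝ) + 59*(P:ℝ)^5 := by positivity
        have hdet : (0:ℝ) < (99723 + 116650*(S:ℝ) + 54590*(S:ℝ)^2 + 12761*(S:ℝ)^3 + 1483*(S:ℝ)^4 + 68*(S:ℝ)^5 + 123919*(P:ℝ) + 114713*(P:ℝ)*(S:ℝ) + 39633*(P:ℝ)*(S:ℝ)^2 + 6052*(P:ℝ)*(S:ℝ)^3 + 343*(P:ℝ)*(S:ℝ)^4 + 57829*(P:ℝ)^2 + 39794*(P:ℝ)^2*(S:ℝ) + 9053*(P:ℝ)^2*(S:ℝ)^2 + 680*(P:ℝ)^2*(S:ℝ)^3 + 12922*(P:ℝ)^3 + 5882*(P:ℝ)^3*(S:ℝ) + 662*(P:ℝ)^3*(S:ℝ)^2 + 1398*(P:ℝ)^4 + 316*(P:ℝ)^4*(S:ℝ) + 59*(P:ℝ)^5) * (5053 + 13380*(S:ℝ) + 14024*(S:ℝ)^2 + 7096*(S:ℝ)^3 + 1712*(S:ℝ)^4 + 160*(S:ℝ)^5 + 9189*(P:ℝ) + 19336*(P:ℝ)*(S:ℝ) + 14844*(P:ℝ)*(S:ℝ)^2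 + 4784*(P:ℝ)*(S:ℝ)^3 + 544*(P:ℝ)*(S:ℝ)^4 + 6148*(P:ℝ)^2 + 9936*(P:ℝ)^2*(S:ℝ) + 5024*(P:ℝ)^2*(S:ℝ)^2 + 768*(P:ℝ)^2*(S:ℝ)^3 + 2188*(P:ℝ)^3 + 2544*(P:ℝ)^3*(S:ℝ) + 640*(P:ℝ)^3*(S:ℝ)^2 + 592*(P:ℝ)^4 + 352*(P:ℝ)^4*(S:ℝ) + 96*(P:ℝ)^5)
            - (-304 + 2316*(S:ℝ) + 2382*(S:ℝ)^2 + 862*(S:ℝ)^3 + 136*(S:ℝ)^4 + 8*(S:ℝ)^5 - 4757*(P:ℝ) - 3604*(P:ℝ)*(S:ℝ) - 983*(P:ℝ)*(S:ℝ)^2 - 112*(P:ℝ)*(S:ℝ)^3 - 4*(P:ℝ)*(S:ℝ)^4 - 5111*(P:ℝ)^2 - 3777*(P:ℝ)^2*(S:ℝ) - 932*(P:ℝ)^2*(S:ℝ)^2 - 76*(P:ℝ)^2*(S:ℝ)^3 - 1932*(P:ℝ)^3 - 984*(P:ℝ)^3*(S:ℝ) - 124*(P:ℝ)^3*(S:ℝ)^2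 - 300*(P:ℝ)^4 - 76*(P:ℝ)^4*(S:ℝ) - 16*(P:ℝ)^5)^2 := by
          have e : (99723 + 116650*(S:ℝ) + 54590*(S:ℝ)^2 + 12761*(S:ℝ)^3 + 1483*(S:ℝ)^4 + 68*(S:ℝ)^5 + 123919*(P:ℝ) + 114713*(P:ℝ)*(S:ℝ) + 39633*(P:ℝ)*(S:ℝ)^2 + 6052*(P:ℝ)*(S:ℝ)^3 + 343*(P:ℝ)*(S:ℝ)^4 + 57829*(P:ℝ)^2 + 39794*(P:ℝ)^2*(S:ℝ) + 9053*(P:ℝ)^2*(S:ℝ)^2 + 680*(P:ℝ)^2*(S:ℝ)^3 + 12922*(P:ℝ)^3 + 5882*(P:ℝ)^3*(S:ℝ) + 662*(P:ℝ)^3*(S:ℝ)^2 + 1398*(P:ℝ)^4 + 316*(P:ℝ)^4*(S:ℝ) + 59*(P:ℝ)^5) * (5053 + 13380*(S:ℝ) + 14024*(S:ℝ)^2 + 7096*(S:ℝ)^3 + 1712*(S:ℝ)^4 + 160*(S:ℝ)^5 + 9189*(P:ℝ) + 19336*(P:ℝ)*(S:ℝ) + 14844*(P:ℝ)*(S:ℝ)^2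 + 4784*(P:ℝ)*(S:ℝ)^3 + 544*(P:ℝ)*(S:ℝ)^4 + 6148*(P:ℝ)^2 + 9936*(P:ℝ)^2*(S:ℝ) + 5024*(P:ℝ)^2*(S:ℝ)^2 + 768*(P:ℝ)^2*(S:ℝ)^3 + 2188*(P:ℝ)^3 + 2544*(P:ℝ)^3*(S:ℝ) + 640*(P:ℝ)^3*(S:ℝ)^2 + 592*(P:ℝ)^4 + 352*(P:ℝ)^4*(S:ℝ) + 96*(P:ℝ)^5)
              - (-304 + 2316*(S:ℝ) + 2382*(S:ℝ)^2 + 862*(S:ℝ)^3 + 136*(S:ℝ)^4 + 8*(S:ℝ)^5 - 4757*(P:ℝ) - 3604*(P:ℝ)*(S:ℝ) - 983*(P:ℝ)*(S:ℝ)^2 - 112*(P:ℝ)*(S:ℝ)^3 - 4*(P:ℝ)*(S:ℝ)^4 - 5111*(P:ℝ)^2 - 3777*(P:ℝ)^2*(S:ℝ) - 932*(P:ℝ)^2*(S:ℝ)^2 - 76*(P:ℝ)^2*(S:ℝ)^3 - 1932*(P:ℝ)^3 - 984*(P:ℝ)^3*(S:ℝ) - 124*(P:ℝ)^3*(S:ℝ)^2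 - 300*(P:ℝ)^4 - 76*(P:ℝ)^4*(S:ℝ) - 16*(P:ℝ)^5)^2 = 503807903 + 1925134318*(S:ℝ) + 3231220022*(S:ℝ)^2 + 3127920213*(S:ℝ)^3 + 1932696095*(S:ℝ)^4 + 797445872*(S:ℝ)^5 + 222953564*(S:ℝ)^6 + 41785656*(S:ℝ)^7 + 5030896*(S:ℝ)^8 + 351520*(S:ℝ)^9 + 10816*(S:ℝ)^10 + 1539625098*(P:ℝ) + 5257664979*(P:ℝ)*(S:ℝ) + 7749184079*(P:ℝ)*(S:ℝ)^2 + 6460230817*(P:ℝ)*(S:ℝ)^3 + 3360392326*(P:ℝ)*(S:ℝ)^4 + 1133557824*(P:ℝ)*(S:ℝ)^5 + 248572268*(P:ℝ)*(S:ℝ)^6 + 34235368*(P:ℝ)*(S:ℝ)^7 + 2690480*(P:ℝ)*(S:ℝ)^8 + 91936*(P:ℝ)*(S:ℝ)^9 + 2018262095*(P:ℝ)^2 + 6120127851*(P:ℝ)^2*(S:ℝ) + 7825512472*(P:ℝ)^2*(S:ℝ)^2 + 5516997112*(P:ℝ)^2*(S:ℝ)^3 + 2352763942*(P:ℝ)^2*(S:ℝ)^4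 + 623651120*(P:ℝ)^2*(S:ℝ)^5 + 100646908*(P:ℝ)^2*(S:ℝ)^6 + 9061104*(P:ℝ)^2*(S:ℝ)^7 + 348816*(P:ℝ)^2*(S:ℝ)^8 + 1526932773*(P:ℝ)^3 + 4067483222*(P:ℝ)^3*(S:ℝ) + 4427913853*(P:ℝ)^3*(S:ℝ)^2 + 2568219302*(P:ℝ)^3*(S:ℝ)^3 + 862158908*(P:ℝ)^3*(S:ℝ)^4 + 168350416*(P:ℝ)^3*(S:ℝ)^5 + 17770688*(P:ℝ)^3*(S:ℝ)^6 + 784160*(P:ℝ)^3*(S:ℝ)^7 + 766822063*(P:ℝ)^4 + 1753302476*(P:ℝ)^4*(S:ℝ) + 1574200189*(P:ℝ)^4*(S:ℝ)^2 + 718808056*(P:ℝ)^4*(S:ℝ)^3 + 177603980*(P:ℝ)^4*(S:ℝ)^4 + 22656816*(P:ℝ)^4*(S:ℝ)^5 + 1170832*(P:ℝ)^4*(S:ℝ)^6 + 279439281*(P:ℝ)^5 + 524730504*(P:ℝ)^5*(S:ℝ) + 368896676*(P:ℝ)^5*(S:ℝ)^2 + 123342216*(P:ℝ)^5*(S:ℝ)^3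 + 19820320*(P:ℝ)^5*(S:ℝ)^4 + 1233024*(P:ℝ)^5*(S:ℝ)^5 + 76589935*(P:ℝ)^6 + 110683232*(P:ℝ)^6*(S:ℝ) + 56280948*(P:ℝ)^6*(S:ℝ)^2 + 12127440*(P:ℝ)^6*(S:ℝ)^3 + 943696*(P:ℝ)^6*(S:ℝ)^4 + 15300212*(P:ℝ)^7 + 15680128*(P:ℝ)^7*(S:ℝ) + 5072704*(P:ℝ)^7*(S:ℝ)^2 + 524576*(P:ℝ)^7*(S:ℝ)^3 + 2045396*(P:ℝ)^8 + 1316848*(P:ℝ)^8*(S:ℝ) + 202800*(P:ℝ)^8*(S:ℝ)^2 + 159536*(P:ℝ)^9 + 48672*(P:ℝ)^9*(S:ℝ) + 5408*(P:ℝ)^10 := by ring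
          rw [e]; positivity
        have hquad := quad_pos _ _ _ α β h11 hdet hne
        subst hA1 hB1 hC1 hD1
        push_cast
        linarith [hquad]
      rw [hd1]
      push_cast at hb2 ⊢
      linarith [hb2]

  · -- r = S + 3
    have hA1 : ∃ A1 : ℝ, A1 = (P:ℝ)+(S:ℝ)+6 := ⟨_, rfl⟩
    obtain ⟨A1, hA1⟩ := hA1
    have hB1 : ∃ B1 : ℝ, B1 = (P:ℝ)+(S:ℝ)+5 := ⟨_, rfl⟩
    obtain ⟨B1, hB1⟩ := hB1
    have hC1 : ∃ C1 : ℝ, C1 = 2*(P:ℝ)+2*(S:ℝ)+5 := ⟨_, rfl⟩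
    obtain ⟨C1, hC1⟩ := hC1
    have hD1 : ∃ D1 : ℝ, D1 = 2*(P:ℝ)+2*(S:ℝ)+3 := ⟨_, rfl⟩
    obtain ⟨D1, hD1⟩ := hD1
    constructor
    · -- q1 bound
      have hb1 := q1_glue _ _ _ q hq (vvec _ _ _ (2*A1*B1) (A1*B1) (3*A1) (2*B1) (B1)) ?cert1
      case cert1 =>
        rw [dot_eval, form_eval]
        have hpos : (0:ℝ) < 5484 + 7089*(S:ℝ) + 3432*(S:ℝ)^2 + 802*(S:ℝ)^3 + 91*(S:ℝ)^4 + 4*(S:ℝ)^5 + 7705*(P:ℝ) + 7658*(P:ℝ)*(S:ℝ) + 2643*(P:ℝ)*(S:ℝ)^2 + 390*(P:ℝ)*(S:ℝ)^3 + 21*(P:ℝ)*(S:ℝ)^4 + 2958*(P:ℝ)^2 + 2325*(P:ℝ)^2*(S:ℝ) + 543*(P:ℝ)^2*(S:ℝ)^2 + 40*(P:ℝ)^2*(S:ℝ)^3 + 484*(P:ℝ)^3 + 280*(P:ℝ)^3*(S:ℝ) + 34*(P:ℝ)^3*(S:ℝ)^2 + 36*(P:ℝ)^4 + 12*(P:ℝ)^4*(S:ℝ)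 + 1*(P:ℝ)^5 := by positivity
        subst hA1 hB1
        push_cast
        linarith [hpos]
      rw [hd0]
      push_cast at hb1 ⊢
      linarith [hb1]
    · -- q2 bound
      have hb2 := q2_glue _ _ _ q hq (vvec _ _ _ (2*A1*B1) (A1*B1) (3*A1) (2*B1) (B1)) (vvec _ _ _ (C1*D1) (-2*(C1*D1)) (-2*C1) (2*D1) (-4*D1)) ?cert2
      case cert2 =>
        intro α β hne
        rw [vvec_smul_add, dot_eval, form_eval]
        have h11 : (0:ℝ) < 123911 + 122232*(S:ℝ) + 47881*(S:ℝ)^2 + 9309*(S:ℝ)^3 + 896*(S:ℝ)^4 + 34*(S:ℝ)^5 + 122276*(P:ℝ) + 95421*(P:ℝ)*(S:ℝ) + 27627*(P:ℝ)*(S:ℝ)^2 + 3519*(P:ℝ)*(S:ℝ)^3 + 166*(P:ℝ)*(S:ℝ)^4 + 46073*(P:ℝ)^2 + 26714*(P:ℝ)^2*(S:ℝ) + 5096*(P:ℝ)^2*(S:ℝ)^2 + 320*(P:ℝ)^2*(S:ℝ)^3 + 8396*(P:ℝ)^3 + 3219*(P:ℝ)^3*(S:ℝ) + 304*(P:ℝ)^3*(S:ℝ)^2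 + 746*(P:ℝ)^4 + 142*(P:ℝ)^4*(S:ℝ) + 26*(P:ℝ)^5 := by positivity
        have hdet : (0:ℝ) < (123911 + 122232*(S:ℝ) + 47881*(S:ℝ)^2 + 9309*(S:ℝ)^3 + 896*(S:ℝ)^4 + 34*(S:ℝ)^5 + 122276*(P:ℝ) + 95421*(P:ℝ)*(S:ℝ) + 27627*(P:ℝ)*(S:ℝ)^2 + 3519*(P:ℝ)*(S:ℝ)^3 + 166*(P:ℝ)*(S:ℝ)^4 + 46073*(P:ℝ)^2 + 26714*(P:ℝ)^2*(S:ℝ) + 5096*(P:ℝ)^2*(S:ℝ)^2 + 320*(P:ℝ)^2*(S:ℝ)^3 + 8396*(P:ℝ)^3 + 3219*(P:ℝ)^3*(S:ℝ) + 304*(P:ℝ)^3*(S:ℝ)^2 + 746*(P:ℝ)^4 + 142*(P:ℝ)^4*(S:ℝ) + 26*(P:ℝ)^5) * (5019 + 11708*(S:ℝ) + 10972*(S:ℝ)^2 + 5048*(S:ℝ)^3 + 1120*(S:ℝ)^4 + 96*(S:ℝ)^5 + 10219*(P:ℝ) + 18520*(P:ℝ)*(S:ℝ) + 12540*(P:ℝ)*(S:ℝ)^2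 + 3664*(P:ℝ)*(S:ℝ)^3 + 384*(P:ℝ)*(S:ℝ)^4 + 7808*(P:ℝ)^2 + 10416*(P:ℝ)^2*(S:ℝ) + 4576*(P:ℝ)^2*(S:ℝ)^2 + 640*(P:ℝ)^2*(S:ℝ)^3 + 2924*(P:ℝ)^3 + 2640*(P:ℝ)^3*(S:ℝ) + 576*(P:ℝ)^3*(S:ℝ)^2 + 608*(P:ℝ)^4 + 288*(P:ℝ)^4*(S:ℝ) + 64*(P:ℝ)^5)
            - (1620 + 5382*(S:ℝ) + 3861*(S:ℝ)^2 + 1150*(S:ℝ)^3 + 156*(S:ℝ)^4 + 8*(S:ℝ)^5 - 2028*(P:ℝ) - 245*(P:ℝ)*(S:ℝ) + 433*(P:ℝ)*(S:ℝ)^2 + 140*(P:ℝ)*(S:ℝ)^3 + 12*(P:ℝ)*(S:ℝ)^4 - 3296*(P:ℝ)^2 - 1945*(P:ℝ)^2*(S:ℝ) - 360*(P:ℝ)^2*(S:ℝ)^2 - 20*(P:ℝ)^2*(S:ℝ)^3 - 1228*(P:ℝ)^3 - 516*(P:ℝ)^3*(S:ℝ) - 52*(P:ℝ)^3*(S:ℝ)^2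 - 172*(P:ℝ)^4 - 36*(P:ℝ)^4*(S:ℝ) - 8*(P:ℝ)^5)^2 := by
          have e : (123911 + 122232*(S:ℝ) + 47881*(S:ℝ)^2 + 9309*(S:ℝ)^3 + 896*(S:ℝ)^4 + 34*(S:ℝ)^5 + 122276*(P:ℝ) + 95421*(P:ℝ)*(S:ℝ) + 27627*(P:ℝ)*(S:ℝ)^2 + 3519*(P:ℝ)*(S:ℝ)^3 + 166*(P:ℝ)*(S:ℝ)^4 + 46073*(P:ℝ)^2 + 26714*(P:ℝ)^2*(S:ℝ) + 5096*(P:ℝ)^2*(S:ℝ)^2 + 320*(P:ℝ)^2*(S:ℝ)^3 + 8396*(P:ℝ)^3 + 3219*(P:ℝ)^3*(S:ℝ) + 304*(P:ℝ)^3*(S:ℝ)^2 + 746*(P:ℝ)^4 + 142*(P:ℝ)^4*(S:ℝ) + 26*(P:ℝ)^5) * (5019 + 11708*(S:ℝ) + 10972*(S:ℝ)^2 + 5048*(S:ℝ)^3 + 1120*(S:ℝ)^4 + 96*(S:ℝ)^5 + 10219*(P:ℝ) + 18520*(P:ℝ)*(S:ℝ) + 12540*(P:ℝ)*(S:ℝ)^2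 + 3664*(P:ℝ)*(S:ℝ)^3 + 384*(P:ℝ)*(S:ℝ)^4 + 7808*(P:ℝ)^2 + 10416*(P:ℝ)^2*(S:ℝ) + 4576*(P:ℝ)^2*(S:ℝ)^2 + 640*(P:ℝ)^2*(S:ℝ)^3 + 2924*(P:ℝ)^3 + 2640*(P:ℝ)^3*(S:ℝ) + 576*(P:ℝ)^3*(S:ℝ)^2 + 608*(P:ℝ)^4 + 288*(P:ℝ)^4*(S:ℝ) + 64*(P:ℝ)^5)
              - (1620 + 5382*(S:ℝ) + 3861*(S:ℝ)^2 + 1150*(S:ℝ)^3 + 156*(S:ℝ)^4 + 8*(S:ℝ)^5 - 2028*(P:ℝ) - 245*(P:ℝ)*(S:ℝ) + 433*(P:ℝ)*(S:ℝ)^2 + 140*(P:ℝ)*(S:ℝ)^3 + 12*(P:ℝ)*(S:ℝ)^4 - 3296*(P:ℝ)^2 - 1945*(P:ℝ)^2*(S:ℝ) - 360*(P:ℝ)^2*(S:ℝ)^2 - 20*(P:ℝ)^2*(S:ℝ)^3 - 1228*(P:ℝ)^3 - 516*(P:ℝ)^3*(S:ℝ) - 52*(P:ℝ)^3*(S:ℝ)^2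 - 172*(P:ℝ)^4 - 36*(P:ℝ)^4*(S:ℝ) - 8*(P:ℝ)^5)^2 = 619284909 + 2046794716*(S:ℝ) + 2989482923*(S:ℝ)^2 + 2528659047*(S:ℝ)^3 + 1366853223*(S:ℝ)^4 + 492712542*(S:ℝ)^5 + 119968564*(S:ℝ)^6 + 19498136*(S:ℝ)^7 + 2026080*(S:ℝ)^8 + 121600*(S:ℝ)^9 + 3200*(S:ℝ)^10 + 1886520473*(P:ℝ) + 5477069127*(P:ℝ)*(S:ℝ) + 6921232248*(P:ℝ)*(S:ℝ)^2 + 4975453090*(P:ℝ)*(S:ℝ)^3 + 2237524664*(P:ℝ)*(S:ℝ)^4 + 652577146*(P:ℝ)*(S:ℝ)^5 + 123502080*(P:ℝ)*(S:ℝ)^6 + 14637192*(P:ℝ)*(S:ℝ)^7 + 986400*(P:ℝ)*(S:ℝ)^8 + 28800*(P:ℝ)*(S:ℝ)^9 + 2454842175*(P:ℝ)^2 + 6198989625*(P:ℝ)^2*(S:ℝ) + 6690005976*(P:ℝ)^2*(S:ℝ)^2 + 4016533645*(P:ℝ)^2*(S:ℝ)^3 + 1465718529*(P:ℝ)^2*(S:ℝ)^4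 + 333014596*(P:ℝ)^2*(S:ℝ)^5 + 46042896*(P:ℝ)^2*(S:ℝ)^6 + 3544800*(P:ℝ)^2*(S:ℝ)^7 + 116400*(P:ℝ)^2*(S:ℝ)^8 + 1820616427*(P:ℝ)^3 + 3949310319*(P:ℝ)^3*(S:ℝ) + 3574776898*(P:ℝ)^3*(S:ℝ)^2 + 1746605858*(P:ℝ)^3*(S:ℝ)^3 + 497503776*(P:ℝ)^3*(S:ℝ)^4 + 82693768*(P:ℝ)^3*(S:ℝ)^5 + 7435200*(P:ℝ)^3*(S:ℝ)^6 + 279200*(P:ℝ)^3*(S:ℝ)^7 + 866866690*(P:ℝ)^4 + 1584590087*(P:ℝ)^4*(S:ℝ) + 1170326051*(P:ℝ)^4*(S:ℝ)^2 + 446935096*(P:ℝ)^4*(S:ℝ)^3 + 93194856*(P:ℝ)^4*(S:ℝ)^4 + 10076800*(P:ℝ)^4*(S:ℝ)^5 + 442000*(P:ℝ)^4*(S:ℝ)^6 + 281534712*(P:ℝ)^5 + 420634298*(P:ℝ)^5*(S:ℝ) + 242858248*(P:ℝ)^5*(S:ℝ)^2 + 67858424*(P:ℝ)^5*(S:ℝ)^3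 + 9197600*(P:ℝ)^5*(S:ℝ)^4 + 484800*(P:ℝ)^5*(S:ℝ)^5 + 63804158*(P:ℝ)^6 + 74378860*(P:ℝ)^6*(S:ℝ) + 31351168*(P:ℝ)^6*(S:ℝ)^2 + 5682400*(P:ℝ)^6*(S:ℝ)^3 + 374800*(P:ℝ)^6*(S:ℝ)^4 + 9962584*(P:ℝ)^7 + 8443320*(P:ℝ)^7*(S:ℝ) + 2300800*(P:ℝ)^7*(S:ℝ)^2 + 202400*(P:ℝ)^7*(S:ℝ)^3 + 1017704*(P:ℝ)^8 + 555200*(P:ℝ)^8*(S:ℝ) + 73200*(P:ℝ)^8*(S:ℝ)^2 + 60800*(P:ℝ)^9 + 16000*(P:ℝ)^9*(S:ℝ) + 1600*(P:ℝ)^10 := by ring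
          rw [e]; positivity
        have hquad := quad_pos _ _ _ α β h11 hdet hne
        subst hA1 hB1 hC1 hD1
        push_cast
        linarith [hquad]
      rw [hd1]
      push_cast at hb2 ⊢
      linarith [hb2]
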